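/- For an odd positive integer n and any nonempty subset W of Fin n, |Σ_{σ : Fin n → {±1}} (Π_{i∈W} σ_i) · sign(Σ_i σ_i)| ≤ Σ_{σ} σ_0 · sign(Σ_i σ_i) = 2 · C(n-1, (n-1)/2). -/

import Mathlib

/-- The spin value of a Boolean configuration entry: `true ↦ 1`, `false ↦ -1`. -/
def spin (b : Bool) : ℤ := if b then 1 else -1

open Finset

namespace MajAux

variable {α : Type*} [Fintype α] [DecidableEq α]

/-- number of `true` coordinates -/
def tc (τ : α → Bool) : ℕ := #(univ.filter (fun i => τ i = true))

omit [DecidableEq α] in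
lemma tc_le (τ : α → Bool) : tc τ ≤ Fintype.card α :=
  (card_filter_le _ _).trans (by simp)

omit [DecidableEq α] in
lemma sum_spin (τ : α → Bool) :
    ∑ i, spin (τ i) = 2 * (tc τ : ℤ) - Fintype.card α := by
  classical
  have : ∀ b : Bool, spin b = 2 * (if b = true then (1:ℤ) else 0) - 1 := by decide
  simp_rw [this]
  rw [Finset.sum_sub_distrib, ← Finset.mul_sum, Finset.sum_boole, Finset.sum_const,
    Finset.card_univ, nsmul_eq_mul, mul_one]
  rfl

omit [DecidableEq α] in
lemma prod_spin (τ : α → Bool) :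
    ∏ i, spin (τ i) = (-1 : ℤ) ^ (Fintype.card α - tc τ) := by
  classical
  have : ∀ b : Bool, spin b = if b = true then (1:ℤ) else -1 := by decide
  simp_rw [this]
  rw [Finset.prod_ite, Finset.prod_const, Finset.prod_const, one_pow, one_mul]
  congr 1
  have h := Finset.card_filter_add_card_filter_not
    (s := (univ : Finset α)) (p := fun i => τ i = true)
  simp only [Finset.card_univ] at h
  unfold tc
  omega

lemma count_card (a : ℕ) :
    #(univ.filter (fun τ : α → Bool => tc τ = a)) = (Fintype.card α).choose a := by
  classical
  rw [← Finset.card_univ (α := α), ← Finset.card_powersetCard]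
  refine Finset.card_nbij' (fun τ => univ.filter (fun i => τ i = true))
    (fun s i => decide (i ∈ s)) ?_ ?_ ?_ ?_
  · intro τ hτ
    simp only [Finset.mem_coe, Finset.mem_filter, Finset.mem_univ, true_and] at hτ
    exact Finset.mem_powersetCard.2 ⟨Finset.subset_univ _, hτ⟩
  · intro s hs
    simp only [Finset.mem_coe, Finset.mem_filter, Finset.mem_univ, true_and, tc]
    refine Finset.mem_filter.2 ⟨Finset.mem_univ _, ?_⟩
    have hs' := (Finset.mem_powersetCard.1 hs).2
    rw [← hs']
    congr 1
    ext i
    simp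
  · intro τ _
    funext i
    simp
  · intro s _
    ext i
    simp

lemma sum_group (f : ℕ → ℤ) :
    ∑ τ : α → Bool, f (tc τ)
      = ∑ a ∈ range (Fintype.card α + 1), ((Fintype.card α).choose a : ℤ) * f a := by
  classical
  rw [← Finset.sum_fiberwise_of_maps_to (g := tc) (t := range (Fintype.card α + 1))
    (fun τ _ => by simpa using Nat.lt_succ_of_le (tc_le τ))]
  refine Finset.sum_congr rfl fun a _ => ?_
  rw [Finset.sum_congr rfl (fun τ hτ => by rw [(Finset.mem_filter.1 hτ).2]),
    Finset.sum_const, count_card, nsmul_eq_mul]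

lemma sign_arg (t x : ℕ) :
    Int.sign (2 * (x:ℤ) - (2 * t + 1)) = if t < x then 1 else -1 := by
  split_ifs with h
  · exact Int.sign_eq_one_of_pos (by push_cast; omega)
  · exact Int.sign_eq_neg_one_of_neg (by push_cast; omega)

/-- discrete difference of the half-sum `g`. -/
lemma gstep (m t a : ℕ) :
    (∑ b ∈ range (m+1), (m.choose b : ℤ) * Int.sign (2 * ((a:ℤ) + 1 + b) - (2 * t + 1)))
      - ∑ b ∈ range (m+1), (m.choose b : ℤ) * Int.sign (2 * ((a:ℤ) + b) - (2 * t + 1))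
    = if a ≤ t then 2 * (m.choose (t - a) : ℤ) else 0 := by
  rw [← Finset.sum_sub_distrib]
  have key : ∀ b ∈ range (m+1),
      (m.choose b : ℤ) * Int.sign (2 * ((a:ℤ) + 1 + b) - (2 * t + 1))
        - (m.choose b : ℤ) * Int.sign (2 * ((a:ℤ) + b) - (2 * t + 1))
      = if b + a = t then 2 * (m.choose b : ℤ) else 0 := by
    intro b _
    have h1 : 2 * ((a:ℤ) + 1 + b) - (2 * t + 1) = 2 * ((a + 1 + b : ℕ) : ℤ) - (2 * t + 1) := by
      push_cast; ring
    have h2 : 2 * ((a:ℤ) + b) - (2 * t + 1) = 2 * ((a + b : ℕ) : ℤ) - (2 * t + 1) := by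
      push_cast; ring
    rw [h1, h2, sign_arg, sign_arg, ← mul_sub]
    split_ifs with h3 h4 h5 <;> (first | ring1 | (exfalso; omega))
  rw [Finset.sum_congr rfl key]
  by_cases ha : a ≤ t
  · simp only [ha, if_true]
    have conv2 : ∀ b ∈ range (m+1), (if b + a = t then 2 * (m.choose b : ℤ) else 0)
        = if b = t - a then 2 * (m.choose b : ℤ) else 0 := by
      intro b _
      exact if_congr (by omega) rfl rfl
    rw [Finset.sum_congr rfl conv2,
      Finset.sum_ite_eq' (range (m+1)) (t - a) (fun b => 2 * (m.choose b : ℤ))]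
    split_ifs with h
    · rfl
    · have : m < t - a := by simp at h; omega
      rw [Nat.choose_eq_zero_of_lt this]
      norm_num
  · rw [if_neg ha]
    refine Finset.sum_eq_zero fun b _ => if_neg (by omega)

/-- rewriting the `k`-th difference as `(k-1)`-st difference of the step. -/
lemma alt (g : ℕ → ℤ) (k : ℕ) :
    ∑ a ∈ range (k+2), (-1:ℤ)^a * ((k+1).choose a : ℤ) * g a
    = ∑ j ∈ range (k+1), (-1:ℤ)^j * (k.choose j : ℤ) * (g j - g (j+1)) := by
  have hR : ∑ j ∈ range (k+1), (-1:ℤ)^j * (k.choose j : ℤ) * (g j - g (j+1))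
      = (∑ j ∈ range (k+1), (-1:ℤ)^j * (k.choose j : ℤ) * g j)
        + ∑ j ∈ range (k+1), (-1:ℤ)^(j+1) * (k.choose j : ℤ) * g (j+1) := by
    rw [← Finset.sum_add_distrib]
    exact Finset.sum_congr rfl fun j _ => by ring
  have h1 : ∑ j ∈ range (k+1), (-1:ℤ)^j * (k.choose j : ℤ) * g j
      = (∑ j ∈ range (k+1), (-1:ℤ)^(j+1) * (k.choose (j+1) : ℤ) * g (j+1)) + g 0 := by
    rw [Finset.sum_range_succ' (fun j => (-1:ℤ)^j * (k.choose j : ℤ) * g j) k,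
      Finset.sum_range_succ (fun j => (-1:ℤ)^(j+1) * (k.choose (j+1) : ℤ) * g (j+1)) k]
    simp [Nat.choose_succ_self]
  have h2 : (∑ j ∈ range (k+1), (-1:ℤ)^(j+1) * (k.choose (j+1) : ℤ) * g (j+1))
      + ∑ j ∈ range (k+1), (-1:ℤ)^(j+1) * (k.choose j : ℤ) * g (j+1)
      = ∑ a ∈ range (k+1), (-1:ℤ)^(a+1) * ((k+1).choose (a+1) : ℤ) * g (a+1) := by
    rw [← Finset.sum_add_distrib]
    refine Finset.sum_congr rfl fun a _ => ?_
    push_cast [Nat.choose_succ_succ]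
    ring
  rw [Finset.sum_range_succ' (fun a => (-1:ℤ)^a * ((k+1).choose a : ℤ) * g a) (k+1), hR, h1]
  simp only [pow_zero, Nat.choose_zero_right, Nat.cast_one, one_mul, mul_one]
  linarith [h2]

lemma reduction (n : ℕ) (W : Finset (Fin n)) :
    ∑ σ : Fin n → Bool, (∏ i ∈ W, spin (σ i)) * Int.sign (∑ i, spin (σ i))
    = ∑ a ∈ range (#W + 1), ((#W).choose a : ℤ) *
        ((-1)^(#W - a) *
          ∑ b ∈ range ((n - #W) + 1), ((n - #W).choose b : ℤ) *
            Int.sign (2 * ((a:ℤ) + b) - n)) := by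
  classical
  have hk : #W ≤ n := by simpa using Finset.card_le_univ W
  set k := #W with hkdef
  set m := n - k with hmdef
  set e := (Equiv.piEquivPiSubtypeProd (fun i : Fin n => i ∈ W) (fun _ => Bool)).symm with he
  have hcard1 : Fintype.card {i : Fin n // i ∈ W} = k := by simp [Fintype.card_coe, hkdef]
  have hcard2 : Fintype.card {i : Fin n // ¬ i ∈ W} = m := by
    rw [Fintype.card_subtype_compl, hcard1]
    simp [hmdef]
  have hσ : ∀ (τ : ({i : Fin n // i ∈ W} → Bool) × ({i : Fin n // ¬ i ∈ W} → Bool))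
      (x : Fin n) (hx : x ∈ W), e τ x = τ.1 ⟨x, hx⟩ := by
    intro τ x hx
    rw [he, Equiv.piEquivPiSubtypeProd_symm_apply, dif_pos hx]
  have hσ' : ∀ (τ : ({i : Fin n // i ∈ W} → Bool) × ({i : Fin n // ¬ i ∈ W} → Bool))
      (x : Fin n) (hx : ¬ x ∈ W), e τ x = τ.2 ⟨x, hx⟩ := by
    intro τ x hx
    rw [he, Equiv.piEquivPiSubtypeProd_symm_apply, dif_neg hx]
  have key : ∀ (τ₁ : {i : Fin n // i ∈ W} → Bool) (τ₂ : {i : Fin n // ¬ i ∈ W} → Bool),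
      (∏ i ∈ W, spin (e (τ₁, τ₂) i)) * Int.sign (∑ i, spin (e (τ₁, τ₂) i))
      = (-1)^(k - tc τ₁) * Int.sign (2 * ((tc τ₁ : ℤ) + (tc τ₂ : ℤ)) - n) := by
    intro τ₁ τ₂
    have hA : ∏ i ∈ W, spin (e (τ₁, τ₂) i) = (-1 : ℤ)^(k - tc τ₁) := by
      rw [Finset.prod_subtype W (fun x => Iff.rfl) (fun i => spin (e (τ₁, τ₂) i))]
      rw [show (∏ x : {i : Fin n // i ∈ W}, spin (e (τ₁, τ₂) ↑x))
          = ∏ x : {i : Fin n // i ∈ W}, spin (τ₁ x) from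
        Finset.prod_congr rfl fun x _ => by rw [hσ (τ₁, τ₂) ↑x x.2]]
      rw [prod_spin, hcard1]
    have hB : ∑ i, spin (e (τ₁, τ₂) i) = 2 * ((tc τ₁ : ℤ) + (tc τ₂ : ℤ)) - n := by
      rw [← Finset.sum_filter_add_sum_filter_not univ (fun i => i ∈ W)
        (fun i => spin (e (τ₁, τ₂) i))]
      have hWf : univ.filter (fun i => i ∈ W) = W := by ext; simp
      have p1 : ∑ i ∈ univ.filter (fun i => i ∈ W), spin (e (τ₁, τ₂) i)
          = 2 * (tc τ₁ : ℤ) - k := by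
        rw [hWf, Finset.sum_subtype W (fun x => Iff.rfl) (fun i => spin (e (τ₁, τ₂) i))]
        rw [show (∑ x : {i : Fin n // i ∈ W}, spin (e (τ₁, τ₂) ↑x))
            = ∑ x : {i : Fin n // i ∈ W}, spin (τ₁ x) from
          Finset.sum_congr rfl fun x _ => by rw [hσ (τ₁, τ₂) ↑x x.2]]
        rw [sum_spin, hcard1]
      have p2 : ∑ i ∈ univ.filter (fun i => ¬ i ∈ W), spin (e (τ₁, τ₂) i)
          = 2 * (tc τ₂ : ℤ) - m := by
        rw [Finset.sum_subtype (p := fun i => ¬ i ∈ W) (univ.filter (fun i => ¬ i ∈ W))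
          (fun x => by simp) (fun i => spin (e (τ₁, τ₂) i))]
        rw [show (∑ x : {i : Fin n // ¬ i ∈ W}, spin (e (τ₁, τ₂) ↑x))
            = ∑ x : {i : Fin n // ¬ i ∈ W}, spin (τ₂ x) from
          Finset.sum_congr rfl fun x _ => by rw [hσ' (τ₁, τ₂) ↑x x.2]]
        rw [sum_spin, hcard2]
      rw [p1, p2]
      have : (k : ℤ) + m = n := by
        rw [hmdef]; push_cast [Nat.cast_sub hk]; ring
      linarith
    rw [hA, hB]
  rw [← Equiv.sum_comp e (fun σ => (∏ i ∈ W, spin (σ i)) * Int.sign (∑ i, spin (σ i))),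
    Fintype.sum_prod_type]
  rw [Finset.sum_congr rfl (fun τ₁ _ => Finset.sum_congr rfl (fun τ₂ _ => key τ₁ τ₂))]
  have inner : ∀ τ₁ : {i : Fin n // i ∈ W} → Bool,
      ∑ τ₂ : {i : Fin n // ¬ i ∈ W} → Bool,
        (-1:ℤ)^(k - tc τ₁) * Int.sign (2 * ((tc τ₁ : ℤ) + (tc τ₂ : ℤ)) - n)
      = ∑ b ∈ range (m + 1), (m.choose b : ℤ) *
          ((-1:ℤ)^(k - tc τ₁) * Int.sign (2 * ((tc τ₁ : ℤ) + b) - n)) := by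
    intro τ₁
    rw [sum_group (fun b => (-1:ℤ)^(k - tc τ₁) * Int.sign (2 * ((tc τ₁ : ℤ) + b) - n)), hcard2]
  rw [Finset.sum_congr rfl (fun τ₁ _ => inner τ₁)]
  rw [sum_group (fun a => ∑ b ∈ range (m + 1), (m.choose b : ℤ) *
        ((-1:ℤ)^(k - a) * Int.sign (2 * ((a : ℤ) + b) - n))), hcard1]
  refine Finset.sum_congr rfl fun a _ => ?_
  simp only [Finset.mul_sum]
  exact Finset.sum_congr rfl fun b _ => by ring

lemma negpow (k a : ℕ) (h : a ≤ k) : (-1:ℤ)^(k-a) = (-1)^k * (-1)^a := by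
  have h1 : (-1:ℤ)^(k-a) * (-1)^a = (-1)^k := by
    rw [← pow_add, Nat.sub_add_cancel h]
  have h2 : (-1:ℤ)^a * (-1)^a = 1 := by
    rw [← pow_add, ← two_mul, pow_mul]
    norm_num
  calc (-1:ℤ)^(k-a) = (-1)^(k-a) * ((-1)^a * (-1)^a) := by rw [h2, mul_one]
    _ = ((-1)^(k-a) * (-1)^a) * (-1)^a := by ring
    _ = (-1)^k * (-1)^a := by rw [h1]

lemma main (n : ℕ) (t : ℕ) (hn : n = 2 * t + 1) (W : Finset (Fin n)) (hW : W.Nonempty) :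
    ∑ σ : Fin n → Bool, (∏ i ∈ W, spin (σ i)) * Int.sign (∑ i, spin (σ i))
    = (-1:ℤ)^(#W + 1) * ∑ j ∈ range (#W), (-1:ℤ)^j * ((#W - 1).choose j : ℤ) *
        (if j ≤ t then 2 * ((n - #W).choose (t - j) : ℤ) else 0) := by
  classical
  have hk1 : 1 ≤ #W := Finset.card_pos.2 hW
  rw [reduction n W]
  set k := #W with hkdef
  set m := n - k with hmdef
  set g : ℕ → ℤ := fun a => ∑ b ∈ range (m+1), (m.choose b : ℤ) *
    Int.sign (2 * ((a:ℤ) + b) - n) with hg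
  have hnz : (n:ℤ) = 2 * (t:ℤ) + 1 := by rw [hn]; push_cast; ring
  have step1 : ∑ a ∈ range (k + 1), (k.choose a : ℤ) * ((-1)^(k - a) * g a)
      = (-1:ℤ)^k * ∑ a ∈ range (k + 1), (-1:ℤ)^a * (k.choose a : ℤ) * g a := by
    rw [Finset.mul_sum]
    refine Finset.sum_congr rfl fun a ha => ?_
    rw [negpow k a (by simpa using Nat.lt_succ_iff.1 (mem_range.1 ha))]
    ring
  have e1 : k - 1 + 2 = k + 1 := by omega
  have e2 : k - 1 + 1 = k := by omega
  have halt := alt g (k - 1)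
  rw [e1, e2] at halt
  have hgs : ∀ j : ℕ, g j - g (j+1)
      = -(if j ≤ t then 2 * (m.choose (t - j) : ℤ) else 0) := by
    intro j
    have hstep := gstep m t j
    have hj1 : g (j+1) = ∑ b ∈ range (m+1), (m.choose b : ℤ) *
        Int.sign (2 * ((j:ℤ) + 1 + b) - (2 * t + 1)) := by
      rw [hg]
      refine Finset.sum_congr rfl fun b _ => ?_
      have harg : 2 * (((j+1 : ℕ):ℤ) + (b:ℤ)) - (n:ℤ)
          = 2 * ((j:ℤ) + 1 + (b:ℤ)) - (2 * (t:ℤ) + 1) := by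
        rw [hnz]; push_cast; ring
      rw [harg]
    have hj0 : g j = ∑ b ∈ range (m+1), (m.choose b : ℤ) *
        Int.sign (2 * ((j:ℤ) + b) - (2 * t + 1)) := by
      rw [hg]
      refine Finset.sum_congr rfl fun b _ => ?_
      rw [hnz]
    rw [hj1, hj0]
    linarith [hstep]
  rw [step1, halt]
  have hfin : ∑ j ∈ range k, (-1:ℤ)^j * ((k-1).choose j : ℤ) * (g j - g (j+1))
      = -∑ j ∈ range k, (-1:ℤ)^j * ((k-1).choose j : ℤ) *
          (if j ≤ t then 2 * ((m.choose (t - j) : ℤ)) else 0) := by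
    rw [← Finset.sum_neg_distrib]
    refine Finset.sum_congr rfl fun j _ => ?_
    rw [hgs j]
    ring
  rw [hfin, pow_succ]
  ring

lemma bound (n t k : ℕ) (hk1 : 1 ≤ k) (hkn : k ≤ n) :
    |∑ j ∈ Finset.range k, (-1:ℤ)^j * ((k - 1).choose j : ℤ) *
        (if j ≤ t then 2 * ((n - k).choose (t - j) : ℤ) else 0)|
      ≤ 2 * ((n - 1).choose t : ℤ) := by
  have hb1 : |∑ j ∈ Finset.range k, (-1:ℤ)^j * ((k - 1).choose j : ℤ) *
        (if j ≤ t then 2 * ((n - k).choose (t - j) : ℤ) else 0)|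
      ≤ ∑ j ∈ Finset.range k, (if j ≤ t then
          2 * ((k - 1).choose j : ℤ) * ((n - k).choose (t - j) : ℤ) else 0) := by
    refine (Finset.abs_sum_le_sum_abs _ _).trans (le_of_eq ?_)
    refine Finset.sum_congr rfl fun j _ => ?_
    rw [abs_mul, abs_mul, abs_pow, abs_neg, abs_one, one_pow, one_mul, Nat.abs_cast]
    split_ifs with hj
    · rw [abs_of_nonneg (by positivity)]
      ring
    · simp
  refine hb1.trans ?_
  have hb2 : ∑ j ∈ Finset.range k, (if j ≤ t then
        2 * ((k - 1).choose j : ℤ) * ((n - k).choose (t - j) : ℤ) else 0)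
      ≤ ∑ j ∈ Finset.range (t+1),
          2 * ((k - 1).choose j : ℤ) * ((n - k).choose (t - j) : ℤ) := by
    rw [← Finset.sum_filter]
    have hsub : (Finset.range k).filter (· ≤ t) ⊆ Finset.range (t+1) := by
      intro j hj
      simp only [Finset.mem_filter, Finset.mem_range] at hj ⊢
      omega
    exact Finset.sum_le_sum_of_subset_of_nonneg hsub (fun j _ _ => by positivity)
  refine hb2.trans (le_of_eq ?_)
  have hv : (n - 1).choose t = ∑ j ∈ Finset.range (t+1),
      (k - 1).choose j * (n - k).choose (t - j) := by
    have hsplit : n - 1 = (k - 1) + (n - k) := by omega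
    rw [hsplit, Nat.add_choose_eq, Finset.Nat.sum_antidiagonal_eq_sum_range_succ_mk]
  rw [hv]
  push_cast
  rw [Finset.mul_sum]
  exact Finset.sum_congr rfl fun j _ => by ring

end MajAux

/-- For odd `n` and any nonempty `W ⊆ Fin n`, the `W`-correlation with the majority
sign is dominated in absolute value by the single-site correlation, which equals
`2 * C(n-1, (n-1)/2)`. -/
theorem majority_correlation_dominated (n : ℕ) (hpos : 0 < n) (hodd : Odd n)
    (W : Finset (Fin n)) (hW : W.Nonempty) :
    (∑ σ : Fin n → Bool, spin (σ ⟨0, hpos⟩) * Int.sign (∑ i, spin (σ i)))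
      = 2 * Nat.choose (n - 1) ((n - 1) / 2) ∧
    |∑ σ : Fin n → Bool, (∏ i ∈ W, spin (σ i)) * Int.sign (∑ i, spin (σ i))|
      ≤ 2 * Nat.choose (n - 1) ((n - 1) / 2) := by
  classical
  obtain ⟨r, hr⟩ := hodd
  set t := (n - 1) / 2 with ht
  have hn : n = 2 * t + 1 := by omega
  constructor
  · have h0 := MajAux.main n t hn {⟨0, hpos⟩} (Finset.singleton_nonempty _)
    simp only [Finset.card_singleton, Finset.prod_singleton] at h0
    rw [h0]
    norm_num [Finset.sum_range_one]
  · have h := MajAux.main n t hn W hW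
    rw [h]
    have hk1 : 1 ≤ #W := Finset.card_pos.2 hW
    have hkn : #W ≤ n := by simpa using Finset.card_le_univ W
    rw [abs_mul, abs_pow, abs_neg, abs_one, one_pow, one_mul]
    exact MajAux.bound n t #W hk1 hkn
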